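/- arXiv:2104.07159 — 4 statements merged into one kernel-verified Lean document; each statement's English description precedes it below -/
import Mathlib

section
/- For every finite formal context K = (G, M, I) and every sublattice S of the concept lattice B(K), the triple K_S := (∪{A : (A,B) ∈ S}, ∪{B : (A,B) ∈ S}, ∪{A×B : (A,B) ∈ S}) is a closed-subcontext of K, i.e., every formal concept of K_S is a formal concept of K. -/
variable {G M : Type*} [Fintype G] [Fintype M]

/-- Attribute derivation A' of an object set A w.r.t. incidence I. -/
def fcaExtDeriv (I : Set (G × M)) (A : Set G) : Set M := {m | ∀ g ∈ A, (g, m) ∈ I}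

/-- Object derivation B' of an attribute set B w.r.t. incidence I. -/
def intDeriv (I : Set (G × M)) (B : Set M) : Set G := {g | ∀ m ∈ B, (g, m) ∈ I}

/-- (A,B) is a formal concept of (G,M,I). -/
def IsConcept (I : Set (G × M)) (A : Set G) (B : Set M) : Prop :=
  fcaExtDeriv I A = B ∧ intDeriv I B = A

/-- Derivation of an object set inside the (sub)context (H,N,J). -/
def subExtDeriv (N : Set M) (J : Set (G × M)) (A : Set G) : Set M :=
  {n ∈ N | ∀ g ∈ A, (g, n) ∈ J}

/-- Derivation of an attribute set inside the (sub)context (H,N,J). -/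
def subIntDeriv (H : Set G) (J : Set (G × M)) (B : Set M) : Set G :=
  {h ∈ H | ∀ n ∈ B, (h, n) ∈ J}

/-- (A,B) is a formal concept of the context (H,N,J). -/
def IsSubConcept (H : Set G) (N : Set M) (J : Set (G × M)) (A : Set G) (B : Set M) : Prop :=
  A ⊆ H ∧ B ⊆ N ∧ subExtDeriv N J A = B ∧ subIntDeriv H J B = A

/-- (H,N,J) is a closed-subcontext of (G,M,I). -/
def IsClosedSubcontext (I : Set (G × M)) (H : Set G) (N : Set M) (J : Set (G × M)) : Prop :=
  J ⊆ I ∩ H ×ˢ N ∧ ∀ A B, IsSubConcept H N J A B → IsConcept I A B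

/-- Binary join in the concept lattice of (G,M,I). -/
def conceptJoin (I : Set (G × M)) (c d : Set G × Set M) : Set G × Set M :=
  (intDeriv I (c.2 ∩ d.2), c.2 ∩ d.2)

/-- Binary meet in the concept lattice of (G,M,I). -/
def conceptMeet (I : Set (G × M)) (c d : Set G × Set M) : Set G × Set M :=
  (c.1 ∩ d.1, fcaExtDeriv I (c.1 ∩ d.1))

/-- S is a sublattice of the concept lattice of (G,M,I). -/
def IsConceptSublattice (I : Set (G × M)) (S : Set (Set G × Set M)) : Prop :=
  S.Nonempty ∧ (∀ c ∈ S, IsConcept I c.1 c.2) ∧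
    ∀ c ∈ S, ∀ d ∈ S, conceptJoin I c d ∈ S ∧ conceptMeet I c d ∈ S

/-- Image of the concept set of the subcontext [H,N] under φ₁(A,B)=(A'',A'). -/
def phi1Image (I : Set (G × M)) (H : Set G) (N : Set M) : Set (Set G × Set M) :=
  {c | ∃ A B, IsSubConcept H N (I ∩ H ×ˢ N) A B ∧
      c = (intDeriv I (fcaExtDeriv I A), fcaExtDeriv I A)}

/-- Image of the concept set of the subcontext [H,N] under φ₂(A,B)=(B',B''). -/
def phi2Image (I : Set (G × M)) (H : Set G) (N : Set M) : Set (Set G × Set M) :=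
  {c | ∃ A B, IsSubConcept H N (I ∩ H ×ˢ N) A B ∧
      c = (intDeriv I B, fcaExtDeriv I (intDeriv I B))}

/-- [H,N] is (isomorphic to) a contranominal scale of dimension k in (G,M,I). -/
def IsContranominal (I : Set (G × M)) (k : ℕ) (H : Set G) (N : Set M) : Prop :=
  ∃ f : Fin k → G, ∃ g : Fin k → M, Function.Injective f ∧ Function.Injective g ∧
    H = Set.range f ∧ N = Set.range g ∧ ∀ i j, (f i, g j) ∈ I ↔ i ≠ j

/-- O is a minimal object generator of the concept with extent A. -/
def IsMinObjGen (I : Set (G × M)) (A : Set G) (O : Set G) : Prop :=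
  intDeriv I (fcaExtDeriv I O) = A ∧ ∀ P ⊂ O, intDeriv I (fcaExtDeriv I P) ≠ A

/-- Q is a minimal attribute generator of the concept with intent B. -/
def IsMinAttGen (I : Set (G × M)) (B : Set M) (Q : Set M) : Prop :=
  fcaExtDeriv I (intDeriv I Q) = B ∧ ∀ P ⊂ Q, fcaExtDeriv I (intDeriv I P) ≠ B

/-- Union of all minimal object generators of the atoms of a Boolean suborder
given by an order embedding f of the powerset of Fin k. -/
def genH (I : Set (G × M)) {k : ℕ} (f : Set (Fin k) → Set G × Set M) : Set G :=
  {g | ∃ i : Fin k, ∃ O : Set G, IsMinObjGen I (f {i}).1 O ∧ g ∈ O}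

/-- Union of all minimal attribute generators of the coatoms of a Boolean suborder. -/
def genN (I : Set (G × M)) {k : ℕ} (f : Set (Fin k) → Set G × Set M) : Set M :=
  {m | ∃ i : Fin k, ∃ Q : Set M, IsMinAttGen I (f {i}ᶜ).2 Q ∧ m ∈ Q}

lemma extDeriv_anti (I : Set (G × M)) {A A' : Set G} (h : A ⊆ A') :
    fcaExtDeriv I A' ⊆ fcaExtDeriv I A := fun m hm g hg => hm g (h hg)

lemma join_aux (I : Set (G × M)) (S : Set (Set G × Set M)) (hS : IsConceptSublattice I S)
    (F : Finset (Set G × Set M)) (hne : F.Nonempty) :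
    (∀ c ∈ F, c ∈ S) → ∃ c ∈ S, c.2 = ⋂ d ∈ F, (d : Set G × Set M).2 := by
  induction hne using Finset.Nonempty.cons_induction with
  | singleton a => exact fun hF => ⟨a, hF a (by simp), by simp⟩
  | cons a F ha hne IH =>
    intro hF
    obtain ⟨c, hcS, hc2⟩ := IH (fun d hd => hF d (Finset.mem_cons_of_mem hd))
    refine ⟨conceptJoin I a c, (hS.2.2 a (hF a (Finset.mem_cons_self _ _)) c hcS).1, ?_⟩
    simp [conceptJoin, Finset.cons_eq_insert, Set.biInter_insert, hc2]

lemma meet_aux (I : Set (G × M)) (S : Set (Set G × Set M)) (hS : IsConceptSublattice I S)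
    (F : Finset (Set G × Set M)) (hne : F.Nonempty) :
    (∀ c ∈ F, c ∈ S) → ∃ c ∈ S, c.1 = ⋂ d ∈ F, (d : Set G × Set M).1 := by
  induction hne using Finset.Nonempty.cons_induction with
  | singleton a => exact fun hF => ⟨a, hF a (by simp), by simp⟩
  | cons a F ha hne IH =>
    intro hF
    obtain ⟨c, hcS, hc1⟩ := IH (fun d hd => hF d (Finset.mem_cons_of_mem hd))
    refine ⟨conceptMeet I a c, (hS.2.2 a (hF a (Finset.mem_cons_self _ _)) c hcS).2, ?_⟩
    simp [conceptMeet, Finset.cons_eq_insert, Set.biInter_insert, hc1]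

theorem stmt0 (I : Set (G × M)) (S : Set (Set G × Set M)) (hS : IsConceptSublattice I S) :
    IsClosedSubcontext I (⋃ c ∈ S, c.1) (⋃ c ∈ S, c.2) (⋃ c ∈ S, c.1 ×ˢ c.2) := by

  classical
  have hfin : S.Finite := Set.toFinite S
  set Sfin := hfin.toFinset with hSfin
  have hSfin_mem : ∀ c, c ∈ Sfin ↔ c ∈ S := fun c => hfin.mem_toFinset
  constructor
  · rintro ⟨g, m⟩ hgm
    simp only [Set.mem_iUnion] at hgm
    obtain ⟨c, hcS, hg, hm⟩ := hgm
    have hc := hS.2.1 c hcS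
    refine ⟨?_, ?_, ?_⟩
    · rw [← hc.1] at hm; exact hm g hg
    · exact Set.mem_iUnion₂.2 ⟨c, hcS, hg⟩
    · exact Set.mem_iUnion₂.2 ⟨c, hcS, hm⟩
  · rintro A B ⟨hAH, hBN, hBdef, hAdef⟩
    -- every concept's intent/extent equalities
    have hco : ∀ c ∈ S, fcaExtDeriv I c.1 = c.2 ∧ intDeriv I c.2 = c.1 := hS.2.1
    -- gamma : for g in H, a concept in S containing g whose intent contains B
    have hgamma : ∀ g ∈ A, ∃ γ ∈ S, g ∈ γ.1 ∧ B ⊆ γ.2 := by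
      intro g hgA
      have hgH := hAH hgA
      obtain ⟨c0, hc0S, hg0⟩ := Set.mem_iUnion₂.1 hgH
      set Fg := Sfin.filter (fun c => g ∈ c.1) with hFg
      have hFgne : Fg.Nonempty := ⟨c0, Finset.mem_filter.2 ⟨(hSfin_mem c0).2 hc0S, hg0⟩⟩
      obtain ⟨γ, hγS, hγ1⟩ := meet_aux I S hS Fg hFgne
        (fun c hc => (hSfin_mem c).1 (Finset.mem_filter.1 hc).1)
      have hgγ : g ∈ γ.1 := by
        rw [hγ1]; exact Set.mem_biInter (fun d hd => (Finset.mem_filter.1 hd).2)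
      refine ⟨γ, hγS, hgγ, ?_⟩
      intro m hmB
      -- (g, m) ∈ J since m ∈ B = subExtDeriv N J A
      rw [← hBdef] at hmB
      obtain ⟨c, hcS, hgc, hmc⟩ := by
        have := hmB.2 g hgA
        simpa only [Set.mem_iUnion, Set.mem_prod] using this
      -- γ.1 ⊆ c.1, hence c.2 ⊆ γ.2
      have hsub : γ.1 ⊆ c.1 := by
        rw [hγ1]
        exact Set.biInter_subset_of_mem (Finset.mem_filter.2 ⟨(hSfin_mem c).2 hcS, hgc⟩)
      have : c.2 ⊆ γ.2 := by
        rw [← (hco c hcS).1, ← (hco γ hγS).1]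
        exact extDeriv_anti I hsub
      exact this hmc
    -- the filter of concepts whose intent contains B
    set Fs := Sfin.filter (fun c => B ⊆ c.2) with hFs
    have hFsne : Fs.Nonempty := by
      obtain ⟨c0, hc0S⟩ := hS.1
      have hSfinne : Sfin.Nonempty := ⟨c0, (hSfin_mem c0).2 hc0S⟩
      obtain ⟨bot, hbotS, hbot1⟩ := meet_aux I S hS Sfin hSfinne
        (fun c hc => (hSfin_mem c).1 hc)
      refine ⟨bot, Finset.mem_filter.2 ⟨(hSfin_mem bot).2 hbotS, ?_⟩⟩
      intro m hmB
      obtain ⟨c, hcS, hmc⟩ := Set.mem_iUnion₂.1 (hBN hmB)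
      have hsub : bot.1 ⊆ c.1 := by
        rw [hbot1]
        exact Set.biInter_subset_of_mem ((hSfin_mem c).2 hcS)
      have : c.2 ⊆ bot.2 := by
        rw [← (hco c hcS).1, ← (hco bot hbotS).1]
        exact extDeriv_anti I hsub
      exact this hmc
    obtain ⟨cs, hcsS, hcs2⟩ := join_aux I S hS Fs hFsne
      (fun c hc => (hSfin_mem c).1 (Finset.mem_filter.1 hc).1)
    have hBsub : B ⊆ cs.2 := by
      intro m hm
      rw [hcs2]
      exact Set.mem_biInter (fun d hd => (Finset.mem_filter.1 hd).2 hm)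
    have hAsub : A ⊆ cs.1 := by
      intro g hgA
      obtain ⟨γ, hγS, hgγ, hBγ⟩ := hgamma g hgA
      rw [← (hco cs hcsS).2]
      intro m hm
      have hmγ : m ∈ γ.2 := by
        rw [hcs2] at hm
        exact Set.biInter_subset_of_mem
          (Finset.mem_filter.2 ⟨(hSfin_mem γ).2 hγS, hBγ⟩) hm
      rw [← (hco γ hγS).2] at hgγ
      exact hgγ m hmγ
    have hBeq : cs.2 = B := by
      refine Set.Subset.antisymm ?_ hBsub
      intro m hm
      rw [← hBdef]
      refine ⟨Set.mem_iUnion₂.2 ⟨cs, hcsS, hm⟩, ?_⟩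
      intro g hgA
      simp only [Set.mem_iUnion, Set.mem_prod]
      exact ⟨cs, hcsS, hAsub hgA, hm⟩
    have hAeq : cs.1 = A := by
      refine Set.Subset.antisymm ?_ hAsub
      intro h hh
      rw [← hAdef]
      refine ⟨Set.mem_iUnion₂.2 ⟨cs, hcsS, hh⟩, ?_⟩
      intro n hnB
      simp only [Set.mem_iUnion, Set.mem_prod]
      exact ⟨cs, hcsS, hh, hBsub hnB⟩
    rw [← hAeq, ← hBeq]
    exact hS.2.1 cs hcsS
end

section
/- Let S = (H, N, J) be a closed-subcontext of the finite formal context K = (G, M, I). Then either H = G, or there exists an attribute m ∈ N whose derivation in S equals H (i.e., m^J = H). Dually, either N = M, or there exists an object g ∈ H with g^J = N. -/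
variable {G M : Type*} [Fintype G] [Fintype M]

theorem stmt3 (I : Set (G × M)) (H : Set G) (N : Set M) (J : Set (G × M))
    (h : IsClosedSubcontext I H N J) :
    (H = Set.univ ∨ ∃ m ∈ N, {h ∈ H | (h, m) ∈ J} = H) ∧
    (N = Set.univ ∨ ∃ g ∈ H, {n ∈ N | (g, n) ∈ J} = N) := by
  obtain ⟨-, hcl⟩ := h
  constructor
  · -- top concept (H, H^J)
    set B : Set M := subExtDeriv N J H with hB
    have hsc : IsSubConcept H N J H B := by
      refine ⟨le_refl _, fun n hn => hn.1, rfl, ?_⟩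
      ext g
      constructor
      · exact fun hg => hg.1
      · exact fun hg => ⟨hg, fun n hn => hn.2 g hg⟩
    have hc := hcl _ _ hsc
    by_cases hBe : B = ∅
    · left
      have := hc.2
      rw [hBe] at this
      rw [← this]
      ext g; simp [intDeriv]
    · right
      obtain ⟨m, hm⟩ := Set.nonempty_iff_ne_empty.2 hBe
      refine ⟨m, hm.1, ?_⟩
      ext g
      constructor
      · exact fun hg => hg.1
      · exact fun hg => ⟨hg, hm.2 g hg⟩
  · -- bottom concept (N^J, N)
    set A : Set G := subIntDeriv H J N with hA
    have hsc : IsSubConcept H N J A N := by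
      refine ⟨fun g hg => hg.1, le_refl _, ?_, rfl⟩
      ext n
      constructor
      · exact fun hn => hn.1
      · exact fun hn => ⟨hn, fun g hg => hg.2 n hn⟩
    have hc := hcl _ _ hsc
    by_cases hAe : A = ∅
    · left
      have := hc.1
      rw [hAe] at this
      rw [← this]
      ext m; simp [fcaExtDeriv]
    · right
      obtain ⟨g, hg⟩ := Set.nonempty_iff_ne_empty.2 hAe
      refine ⟨g, hg.1, ?_⟩
      ext n
      constructor
      · exact fun hn => hn.1
      · exact fun hn => ⟨hn, hg.2 n hn⟩
end

section
/- Let (A, B) ≤ (C, D) be formal concepts of a finite formal context K = (G, M, I). Then (C, B, I ∩ (C × B)) is a closed-subcontext of K whose concept lattice is exactly the interval [(A,B), (C,D)] in the concept lattice of K. -/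
variable {G M : Type*} [Fintype G] [Fintype M]

lemma subExt_eq (I : Set (G × M)) (C B E : _) (hEC : E ⊆ C) :
    subExtDeriv B (I ∩ C ×ˢ B) E = B ∩ fcaExtDeriv I E := by
  ext m
  constructor
  · rintro ⟨hmB, h⟩; exact ⟨hmB, fun g hg => (h g hg).1⟩
  · rintro ⟨hmB, h⟩; exact ⟨hmB, fun g hg => ⟨h g hg, hEC hg, hmB⟩⟩

lemma subInt_eq (I : Set (G × M)) (C B F : _) (hFB : F ⊆ B) :
    subIntDeriv C (I ∩ C ×ˢ B) F = C ∩ intDeriv I F := by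
  ext g
  constructor
  · rintro ⟨hgC, h⟩; exact ⟨hgC, fun m hm => (h m hm).1⟩
  · rintro ⟨hgC, h⟩; exact ⟨hgC, fun m hm => ⟨h m hm, hgC, hFB hm⟩⟩

theorem stmt8 (I : Set (G × M)) (A C : Set G) (B D : Set M)
    (h1 : IsConcept I A B) (h2 : IsConcept I C D) (hle : A ⊆ C) :
    IsClosedSubcontext I C B (I ∩ C ×ˢ B) ∧
      ∀ E F, IsSubConcept C B (I ∩ C ×ˢ B) E F ↔ IsConcept I E F ∧ A ⊆ E ∧ E ⊆ C := by
  obtain ⟨hAB, hBA⟩ := h1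
  obtain ⟨hCD, hDC⟩ := h2
  have hDB : D ⊆ B := by
    intro m hm
    rw [← hCD] at hm
    rw [← hAB]
    intro g hg
    exact hm g (hle hg)
  have key : ∀ E F, IsSubConcept C B (I ∩ C ×ˢ B) E F ↔ IsConcept I E F ∧ A ⊆ E ∧ E ⊆ C := by
    intro E F
    constructor
    · rintro ⟨hEC, hFB, hsE, hsF⟩
      rw [subExt_eq I C B E hEC] at hsE
      rw [subInt_eq I C B F hFB] at hsF
      have hAE : A ⊆ E := by
        rw [← hsF]
        intro g hg
        rw [← hBA] at hg
        exact ⟨hle (hBA ▸ hg), fun m hm => hg m (hFB hm)⟩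
      have hDF : D ⊆ F := by
        rw [← hsE]
        intro m hm
        rw [← hCD] at hm
        exact ⟨hDB (hCD ▸ hm), fun g hg => hm g (hEC hg)⟩
      have hIF : intDeriv I F ⊆ C := by
        intro g hg
        rw [← hDC]
        exact fun m hm => hg m (hDF hm)
      have hE : intDeriv I F = E := by
        rw [← hsF]
        exact (Set.inter_eq_self_of_subset_right hIF).symm
      have hEB : fcaExtDeriv I E ⊆ B := by
        intro m hm
        rw [← hAB]
        exact fun g hg => hm g (hAE hg)
      have hF : fcaExtDeriv I E = F := by
        rw [← hsE]
        exact (Set.inter_eq_self_of_subset_right hEB).symm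
      exact ⟨⟨hF, hE⟩, hAE, hEC⟩
    · rintro ⟨⟨hEF, hFE⟩, hAE, hEC⟩
      have hFB : F ⊆ B := by
        rw [← hEF, ← hAB]
        intro m hm g hg
        exact hm g (hAE hg)
      refine ⟨hEC, hFB, ?_, ?_⟩
      · rw [subExt_eq I C B E hEC, hEF]
        exact Set.inter_eq_self_of_subset_right hFB
      · rw [subInt_eq I C B F hFB, hFE]
        exact Set.inter_eq_self_of_subset_right hEC
  exact ⟨⟨subset_rfl, fun E F h => ((key E F).mp h).1⟩, key⟩
end

section
/- For a single concept (A,B) of a subcontext S of a finite context K: φ₁(A,B) = φ₂(A,B) if and only if B' × A' ⊆ I, and this holds if and only if (A' \ B) × (B' \ A) ⊆ I. -/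
variable {G M : Type*} [Fintype G] [Fintype M]

theorem stmt13 (I : Set (G × M)) (H : Set G) (N : Set M) (A : Set G) (B : Set M)
    (h : IsSubConcept H N (I ∩ H ×ˢ N) A B) :
    (((intDeriv I (fcaExtDeriv I A), fcaExtDeriv I A) : Set G × Set M) =
        (intDeriv I B, fcaExtDeriv I (intDeriv I B)) ↔
      intDeriv I B ×ˢ fcaExtDeriv I A ⊆ I) ∧
    (intDeriv I B ×ˢ fcaExtDeriv I A ⊆ I ↔ (intDeriv I B \ A) ×ˢ (fcaExtDeriv I A \ B) ⊆ I) := by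
  obtain ⟨hAH, hBN, hE, hI⟩ := h
  -- B ⊆ fcaExtDeriv I A
  have hBA' : B ⊆ fcaExtDeriv I A := by
    intro m hm
    rw [← hE] at hm
    exact fun g hg => ((hm.2 g hg).1)
  -- A ⊆ intDeriv I B
  have hAB' : A ⊆ intDeriv I B := by
    intro g hg
    rw [← hI] at hg
    exact fun m hm => ((hg.2 m hm).1)
  constructor
  · constructor
    · intro heq
      have h1 : intDeriv I (fcaExtDeriv I A) = intDeriv I B := congrArg Prod.fst heq
      intro p hp
      have hg : p.1 ∈ intDeriv I (fcaExtDeriv I A) := h1 ▸ hp.1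
      exact hg p.2 hp.2
    · intro hsub
      have h1 : intDeriv I (fcaExtDeriv I A) = intDeriv I B := by
        apply Set.Subset.antisymm
        · intro g hg m hm
          exact hg m (hBA' hm)
        · intro g hg m hm
          exact hsub (Set.mk_mem_prod hg hm)
      have h2 : fcaExtDeriv I A = fcaExtDeriv I (intDeriv I B) := by
        apply Set.Subset.antisymm
        · intro m hm g hg
          exact hsub (Set.mk_mem_prod hg hm)
        · intro m hm g hg
          exact hm g (hAB' hg)
      rw [h1, h2]
  · constructor
    · intro hsub p hp
      exact hsub ⟨hp.1.1, hp.2.1⟩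
    · intro hsub p hp
      obtain ⟨hg, hm⟩ := hp
      by_cases hgA : p.1 ∈ A
      · exact hm p.1 hgA
      · by_cases hmB : p.2 ∈ B
        · exact hg p.2 hmB
        · exact hsub ⟨⟨hg, hgA⟩, hm, hmB⟩
end
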